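/- Let G be a group with elements f_1^(r), f_2^(r), f_1^(l), f_2^(k), c, d (with k ≠ l) satisfying: [f_i^(k'), f_j^(l')] = V_{i,j} for all pairs of distinct upper indices (V_{i,i} = 1, V_{1,2} = d^{-1}, V_{2,1} = d), f_2^(k) d (f_2^(k))^{-1} = f_2^(r) d (f_2^(r))^{-1}, and f_2^(k) c (f_2^(k))^{-1} = f_2^(r) c (f_2^(r))^{-1} (and similarly for index 1). Then c commutes with δ := [f_2^(r), f_1^(r)] d^{-1}, i.e. c^{-1} f_2^(r) f_1^(r) (f_2^(r))^{-1} f_2^(k) (f_1^(r))^{-1} (f_2^(k))^{-1} c = f_2^(r) f_1^(r) (f_2^(r))^{-1} f_2^(k) (f_1^(r))^{-1} (f_2^(k))^{-1} under the stated hypotheses (requiring the existence of the auxiliary index l distinct from k, i.e. r ≥ 4 in the original setting). -/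

import Mathlib

open scoped commutatorElement

private lemma conj1 {G : Type*} [Group G] (x z : G) (h : x * z = z * x) :
    x⁻¹ * z * x = z := by rw [mul_assoc, ← h]; group

private lemma conj2 {G : Type*} [Group G] (x z : G) (h : x * z = z * x) :
    x * z * x⁻¹ = z := by rw [h]; group

/-- Relation `[δ, c] = 1` is a consequence of the relations `M^C` (Lemma 5.2(2)):
with upper indices `0 ↦ r`, `1 ↦ k`, `2 ↦ l` (distinct), `c` commutes with
`δ = [f₂⁽ʳ⁾, f₁⁽ʳ⁾] d⁻¹`. -/
theorem stmt17 {G : Type*} [Group G] (F : Fin 2 → Fin 3 → G) (c d : G)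
    (V : Fin 2 → Fin 2 → G)
    (hVdef : ∀ i j, V i j = if i = j then 1 else (if i = 0 then d⁻¹ else d))
    (hV : ∀ (i j : Fin 2) (s t : Fin 3), s ≠ t → ⁅F i s, F j t⁆ = V i j)
    (hd : ∀ (i : Fin 2) (s t : Fin 3), F i s * d * (F i s)⁻¹ = F i t * d * (F i t)⁻¹)
    (hc : ∀ (i : Fin 2) (s t : Fin 3), F i s * c * (F i s)⁻¹ = F i t * c * (F i t)⁻¹) :
    c⁻¹ * (F 1 0 * F 0 0 * (F 1 0)⁻¹ * F 1 1 * (F 0 0)⁻¹ * (F 1 1)⁻¹) * c =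
      F 1 0 * F 0 0 * (F 1 0)⁻¹ * F 1 1 * (F 0 0)⁻¹ * (F 1 1)⁻¹ := by
  have hV01 : V 0 1 = d⁻¹ := by rw [hVdef]; rfl
  have hV10 : V 1 0 = d := by rw [hVdef]; rfl
  have hV00 : V 0 0 = 1 := by rw [hVdef]; rfl
  have hV11 : V 1 1 = 1 := by rw [hVdef]; rfl
  -- instantiate
  have hab1' := hV 0 1 0 1 (by decide)
  have hbu' := hV 1 0 0 2 (by decide)
  have hb1u' := hV 1 0 1 2 (by decide)
  have hbb1' := hV 1 1 0 1 (by decide)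
  have hau' := hV 0 0 0 2 (by decide)
  have hc0 := hc 0 0 2
  have hd0 := hd 0 0 2
  have hc1 := hc 1 0 1
  have hd1 := hd 1 0 1
  set a := F 0 0 with ha
  set b := F 1 0 with hb
  set b1 := F 1 1 with hb1
  set u := F 0 2 with hu
  rw [hV01, commutatorElement_def] at hab1'
  rw [hV10, commutatorElement_def] at hbu'
  rw [hV10, commutatorElement_def] at hb1u'
  rw [hV11] at hbb1'
  rw [hV00] at hau'
  -- commutations
  have Hbb1 : Commute b b1 := commutatorElement_eq_one_iff_commute.mp hbb1'
  have Hau : Commute a u := commutatorElement_eq_one_iff_commute.mp hau'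
  -- g := u⁻¹ * a commutes with c and d
  have Hgc : Commute (u⁻¹ * a) c := by
    show (u⁻¹ * a) * c = c * (u⁻¹ * a)
    calc (u⁻¹ * a) * c = u⁻¹ * (a * c * a⁻¹) * a := by group
      _ = u⁻¹ * (u * c * u⁻¹) * a := by rw [hc0]
      _ = c * (u⁻¹ * a) := by group
  have Hgd : Commute (u⁻¹ * a) d := by
    show (u⁻¹ * a) * d = d * (u⁻¹ * a)
    calc (u⁻¹ * a) * d = u⁻¹ * (a * d * a⁻¹) * a := by group
      _ = u⁻¹ * (u * d * u⁻¹) * a := by rw [hd0]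
      _ = d * (u⁻¹ * a) := by group
  -- e := b1⁻¹ * b commutes with c, d, u
  have Hec : Commute (b1⁻¹ * b) c := by
    show (b1⁻¹ * b) * c = c * (b1⁻¹ * b)
    calc (b1⁻¹ * b) * c = b1⁻¹ * (b * c * b⁻¹) * b := by group
      _ = b1⁻¹ * (b1 * c * b1⁻¹) * b := by rw [hc1]
      _ = c * (b1⁻¹ * b) := by group
  have Hed : Commute (b1⁻¹ * b) d := by
    show (b1⁻¹ * b) * d = d * (b1⁻¹ * b)
    calc (b1⁻¹ * b) * d = b1⁻¹ * (b * d * b⁻¹) * b := by group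
      _ = b1⁻¹ * (b1 * d * b1⁻¹) * b := by rw [hd1]
      _ = d * (b1⁻¹ * b) := by group
  have Heu : Commute (b1⁻¹ * b) u := by
    show (b1⁻¹ * b) * u = u * (b1⁻¹ * b)
    calc (b1⁻¹ * b) * u = b1⁻¹ * (b * u * b⁻¹ * u⁻¹) * (u * b) := by group
      _ = b1⁻¹ * d * (u * b) := by rw [hbu']
      _ = b1⁻¹ * (b1 * u * b1⁻¹ * u⁻¹) * (u * b) := by rw [hb1u']
      _ = u * (b1⁻¹ * b) := by group
  have Hgu : Commute (u⁻¹ * a) u := Commute.mul_left (Commute.refl u).inv_left Hau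
  have HgZ : Commute (u⁻¹ * a) (d⁻¹ * c * d) := (Hgd.inv_right.mul_right Hgc).mul_right Hgd
  have HeZ : Commute (b1⁻¹ * b) (d⁻¹ * c * d) := (Hed.inv_right.mul_right Hec).mul_right Hed
  have HgW : Commute (u⁻¹ * a) (u⁻¹ * (d⁻¹ * c * d) * u) :=
    (Hgu.inv_right.mul_right HgZ).mul_right Hgu
  have HeW : Commute (b1⁻¹ * b) (u⁻¹ * (d⁻¹ * c * d) * u) :=
    (Heu.inv_right.mul_right HeZ).mul_right Heu
  -- conjugation of d⁻¹cd by a equals by u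
  have haZ : a⁻¹ * (d⁻¹ * c * d) * a = u⁻¹ * (d⁻¹ * c * d) * u := by
    calc a⁻¹ * (d⁻¹ * c * d) * a
        = (u⁻¹ * a)⁻¹ * (u⁻¹ * (d⁻¹ * c * d) * u) * (u⁻¹ * a) := by group
      _ = u⁻¹ * (d⁻¹ * c * d) * u := conj1 _ _ HgW.eq
  have heWc : (b1⁻¹ * b)⁻¹ * (u⁻¹ * (d⁻¹ * c * d) * u) * (b1⁻¹ * b) =
      u⁻¹ * (d⁻¹ * c * d) * u := conj1 _ _ HeW.eq
  have heZc : (b1⁻¹ * b) * (d⁻¹ * c * d) * (b1⁻¹ * b)⁻¹ = d⁻¹ * c * d := conj2 _ _ HeZ.eq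
  -- key: [a, e] commutes with d⁻¹cd (conjugate form)
  have hK : (b1⁻¹ * b) * a * (b1⁻¹ * b)⁻¹ * a⁻¹ * (d⁻¹ * c * d) *
      (a * (b1⁻¹ * b) * a⁻¹ * (b1⁻¹ * b)⁻¹) = d⁻¹ * c * d := by
    calc (b1⁻¹ * b) * a * (b1⁻¹ * b)⁻¹ * a⁻¹ * (d⁻¹ * c * d) *
        (a * (b1⁻¹ * b) * a⁻¹ * (b1⁻¹ * b)⁻¹)
        = (b1⁻¹ * b) * a * (b1⁻¹ * b)⁻¹ * (a⁻¹ * (d⁻¹ * c * d) * a) *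
          (b1⁻¹ * b) * a⁻¹ * (b1⁻¹ * b)⁻¹ := by group
      _ = (b1⁻¹ * b) * a * (b1⁻¹ * b)⁻¹ * (u⁻¹ * (d⁻¹ * c * d) * u) *
          (b1⁻¹ * b) * a⁻¹ * (b1⁻¹ * b)⁻¹ := by rw [haZ]
      _ = (b1⁻¹ * b) * a * ((b1⁻¹ * b)⁻¹ * (u⁻¹ * (d⁻¹ * c * d) * u) * (b1⁻¹ * b)) *
          a⁻¹ * (b1⁻¹ * b)⁻¹ := by group
      _ = (b1⁻¹ * b) * a * (u⁻¹ * (d⁻¹ * c * d) * u) * a⁻¹ * (b1⁻¹ * b)⁻¹ := by rw [heWc]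
      _ = (b1⁻¹ * b) * a * (a⁻¹ * (d⁻¹ * c * d) * a) * a⁻¹ * (b1⁻¹ * b)⁻¹ := by rw [← haZ]
      _ = (b1⁻¹ * b) * (d⁻¹ * c * d) * (b1⁻¹ * b)⁻¹ := by group
      _ = d⁻¹ * c * d := heZc
  -- d = [b1, a]
  have hd_eq : d = b1 * a * b1⁻¹ * a⁻¹ := by
    calc d = (d⁻¹)⁻¹ := by group
      _ = (a * b1 * a⁻¹ * b1⁻¹)⁻¹ := by rw [hab1']
      _ = b1 * a * b1⁻¹ * a⁻¹ := by group
  -- δ = d * [a,e]⁻¹ * d⁻¹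
  have hδeq : d * ((b1⁻¹ * b) * a * (b1⁻¹ * b)⁻¹ * a⁻¹) * d⁻¹ =
      b * a * b⁻¹ * b1 * a⁻¹ * b1⁻¹ := by
    calc d * ((b1⁻¹ * b) * a * (b1⁻¹ * b)⁻¹ * a⁻¹) * d⁻¹
        = (d * (b1⁻¹ * b)) * (a * b⁻¹ * b1 * a⁻¹ * d⁻¹) := by group
      _ = ((b1⁻¹ * b) * d) * (a * b⁻¹ * b1 * a⁻¹ * d⁻¹) := by rw [Hed.symm.eq]
      _ = ((b1⁻¹ * b) * (b1 * a * b1⁻¹ * a⁻¹)) *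
          (a * b⁻¹ * b1 * a⁻¹ * (b1 * a * b1⁻¹ * a⁻¹)⁻¹) := by rw [hd_eq]
      _ = b1⁻¹ * (b * b1) * (a * (b1⁻¹ * (b⁻¹ * b1)) * (b1 * a⁻¹ * b1⁻¹)) := by group
      _ = b1⁻¹ * (b1 * b) * (a * (b1⁻¹ * (b1 * b⁻¹)) * (b1 * a⁻¹ * b1⁻¹)) := by
            rw [Hbb1.eq, Hbb1.inv_left.eq]
      _ = b * a * b⁻¹ * b1 * a⁻¹ * b1⁻¹ := by group
  have hKcomm : ((b1⁻¹ * b) * a * (b1⁻¹ * b)⁻¹ * a⁻¹) * (d⁻¹ * c * d) =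
      (d⁻¹ * c * d) * ((b1⁻¹ * b) * a * (b1⁻¹ * b)⁻¹ * a⁻¹) := by
    calc ((b1⁻¹ * b) * a * (b1⁻¹ * b)⁻¹ * a⁻¹) * (d⁻¹ * c * d)
        = ((b1⁻¹ * b) * a * (b1⁻¹ * b)⁻¹ * a⁻¹ * (d⁻¹ * c * d) *
            (a * (b1⁻¹ * b) * a⁻¹ * (b1⁻¹ * b)⁻¹)) *
          ((b1⁻¹ * b) * a * (b1⁻¹ * b)⁻¹ * a⁻¹) := by group
      _ = (d⁻¹ * c * d) * ((b1⁻¹ * b) * a * (b1⁻¹ * b)⁻¹ * a⁻¹) := by rw [hK]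
  rw [← hδeq]
  calc c⁻¹ * (d * ((b1⁻¹ * b) * a * (b1⁻¹ * b)⁻¹ * a⁻¹) * d⁻¹) * c
      = c⁻¹ * d * (((b1⁻¹ * b) * a * (b1⁻¹ * b)⁻¹ * a⁻¹) * (d⁻¹ * c * d)) * d⁻¹ := by group
    _ = c⁻¹ * d * ((d⁻¹ * c * d) * ((b1⁻¹ * b) * a * (b1⁻¹ * b)⁻¹ * a⁻¹)) * d⁻¹ := by
          rw [hKcomm]
    _ = d * ((b1⁻¹ * b) * a * (b1⁻¹ * b)⁻¹ * a⁻¹) * d⁻¹ := by group
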